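/- Let D be a finite set of points in ℝ² whose pairwise Euclidean distances are all at least 2, let L = lift(D), let B be the set of blocking points, and let P = L ∪ B; suppose L and B are disjoint. If I ⊆ D is an independent set (all pairwise distances in I exceed 2), then the set S = lift(I) ∪ B ⊆ P is in empty convex position: S is in convex position and the convex hull of S contains no point of P \ S. -/

import Mathlib

/-- The standard lifting map to the elliptic paraboloid: `(x₁, x₂) ↦ (x₁, x₂, x₁² + x₂²)`. -/
noncomputable def lift (x : EuclideanSpace ℝ (Fin 2)) : EuclideanSpace ℝ (Fin 3) :=
  (WithLp.equiv 2 (Fin 3 → ℝ)).symm ![x 0, x 1, x 0 ^ 2 + x 1 ^ 2]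

/-- The set of blocking points of `D`: midpoints `(lift c + lift c')/2` over all touching
pairs `c, c' ∈ D` (i.e. pairs with `dist c c' = 2`). -/
noncomputable def blockers (D : Set (EuclideanSpace ℝ (Fin 2))) :
    Set (EuclideanSpace ℝ (Fin 3)) :=
  {b | ∃ c ∈ D, ∃ c' ∈ D, dist c c' = 2 ∧ b = (1 / 2 : ℝ) • (lift c + lift c')}

lemma lin (a0 a1 e v0 v1 : ℝ) : IsLinearMap ℝ
    (fun z : EuclideanSpace ℝ (Fin 3) =>
      z 2 - a0 * z 0 - a1 * z 1 - e * (v0 * z 0 + v1 * z 1)) := by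
  constructor <;> intros <;>
    simp [PiLp.add_apply, PiLp.smul_apply, smul_eq_mul] <;> ring

lemma hull_sep {S : Set (EuclideanSpace ℝ (Fin 3))} {f : EuclideanSpace ℝ (Fin 3) → ℝ}
    (hf : IsLinearMap ℝ f) (c : ℝ) (hS : ∀ s ∈ S, c ≤ f s) {x} (hx : f x < c) :
    x ∉ convexHull ℝ S := by
  intro h
  have h2 : convexHull ℝ S ⊆ {z | c ≤ f z} := convexHull_min hS (convex_halfSpace_ge hf c)
  exact absurd (h2 h) (by simpa using not_le_of_gt hx)

lemma blockers_finite {D : Set (EuclideanSpace ℝ (Fin 2))} (hD : D.Finite) :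
    (blockers D).Finite := by
  apply Set.Finite.subset ((hD.prod hD).image
    (fun p => (1/2 : ℝ) • (lift p.1 + lift p.2)))
  rintro b ⟨c, hc, c', hc', _, rfl⟩
  exact ⟨(c, c'), ⟨hc, hc'⟩, rfl⟩

lemma gap_far (y0 y1 c0 c1 c0' c1' : ℝ) (h1 : 4 ≤ (y0-c0)^2+(y1-c1)^2)
    (h2 : 4 ≤ (y0-c0')^2+(y1-c1')^2) (hcc : (c0-c0')^2+(c1-c1')^2 = 4) :
    3 ≤ (y0-(c0+c0')/2)^2 + (y1-(c1+c1')/2)^2 := by nlinarith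

lemma gap_near (c0 c1 c0' c1' : ℝ) (hcc : (c0-c0')^2+(c1-c1')^2 = 4) :
    (c0-(c0+c0')/2)^2 + (c1-(c1+c1')/2)^2 = 1 := by linear_combination hcc/4

lemma core_ineq (c0 c1 c0' c1' s0 s1 s2 e M : ℝ)
    (hcc : (c0-c0')^2+(c1-c1')^2 = 4)
    (he : 0 < e) (heM : e*(M+3) = 1)
    (hT : (c0'-c0)*s0 + (c1'-c1)*s1
        - ((c0'-c0)*((c0+c0')/2) + (c1'-c1)*((c1+c1')/2)) ≤ M)
    (hq : 2 ≤ s2 - 2*((c0+c0')/2)*s0 - 2*((c1+c1')/2)*s1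
        + (((c0+c0')/2)^2 + ((c1+c1')/2)^2)) :
    ((c0^2+c1^2+(c0'^2+c1'^2))/2 - 2*((c0+c0')/2)*((c0+c0')/2)
      - 2*((c1+c1')/2)*((c1+c1')/2)
      - e*((c0'-c0)*((c0+c0')/2)+(c1'-c1)*((c1+c1')/2))) + 2*e
    ≤ s2 - 2*((c0+c0')/2)*s0 - 2*((c1+c1')/2)*s1 - e*((c0'-c0)*s0+(c1'-c1)*s1) := by
  nlinarith [mul_le_mul_of_nonneg_left hT he.le, heM, hq, hcc, he]

lemma core_eq (c0 c1 c0' c1' e : ℝ) (hcc : (c0-c0')^2+(c1-c1')^2 = 4) :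
    ((c0^2+c1^2+(c0'^2+c1'^2))/2 - 2*((c0+c0')/2)*((c0+c0')/2)
      - 2*((c1+c1')/2)*((c1+c1')/2)
      - e*((c0'-c0)*((c0+c0')/2)+(c1'-c1)*((c1+c1')/2))) + 2*e
    ≤ (c0^2+c1^2) - 2*((c0+c0')/2)*c0 - 2*((c1+c1')/2)*c1
      - e*((c0'-c0)*c0+(c1'-c1)*c1) := by
  apply le_of_eq
  linear_combination (-(e/2)) * hcc

lemma dist_sq (x y : EuclideanSpace ℝ (Fin 2)) :
    dist x y ^ 2 = (x 0 - y 0) ^ 2 + (x 1 - y 1) ^ 2 := by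
  rw [EuclideanSpace.dist_eq, Real.sq_sqrt (by positivity)]
  simp [Fin.sum_univ_two, Real.dist_eq, sq_abs]

lemma sep4 {x y : EuclideanSpace ℝ (Fin 2)} (h : 2 ≤ dist x y) :
    4 ≤ (x 0 - y 0) ^ 2 + (x 1 - y 1) ^ 2 := by
  have h2 := dist_sq x y; nlinarith [dist_nonneg (x := x) (y := y)]

lemma dist2sq {x y : EuclideanSpace ℝ (Fin 2)} (h : dist x y = 2) :
    (x 0 - y 0) ^ 2 + (x 1 - y 1) ^ 2 = 4 := by
  have h2 := dist_sq x y; rw [h] at h2; norm_num at h2; linarith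

@[simp] lemma lift0 (x : EuclideanSpace ℝ (Fin 2)) : lift x 0 = x 0 := by simp [lift]
@[simp] lemma lift1 (x : EuclideanSpace ℝ (Fin 2)) : lift x 1 = x 1 := by simp [lift]
@[simp] lemma lift2 (x : EuclideanSpace ℝ (Fin 2)) : lift x 2 = x 0 ^ 2 + x 1 ^ 2 := by simp [lift]

@[simp] lemma blk0 (x y : EuclideanSpace ℝ (Fin 2)) :
    ((1/2 : ℝ) • (lift x + lift y)) 0 = (x 0 + y 0) / 2 := by
  simp [PiLp.smul_apply, PiLp.add_apply, smul_eq_mul]; ring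
@[simp] lemma blk1 (x y : EuclideanSpace ℝ (Fin 2)) :
    ((1/2 : ℝ) • (lift x + lift y)) 1 = (x 1 + y 1) / 2 := by
  simp [PiLp.smul_apply, PiLp.add_apply, smul_eq_mul]; ring
@[simp] lemma blk2 (x y : EuclideanSpace ℝ (Fin 2)) :
    ((1/2 : ℝ) • (lift x + lift y)) 2 = (x 0 ^ 2 + x 1 ^ 2 + (y 0 ^ 2 + y 1 ^ 2)) / 2 := by
  simp [PiLp.smul_apply, PiLp.add_apply, smul_eq_mul]; ring

set_option maxHeartbeats 1000000 in
lemma blocker_vertex (D : Set (EuclideanSpace ℝ (Fin 2))) (hD : D.Finite)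
    (hsep : ∀ p ∈ D, ∀ q ∈ D, p ≠ q → 2 ≤ dist p q)
    (I : Set (EuclideanSpace ℝ (Fin 2))) (hI : I ⊆ D)
    (c c' : EuclideanSpace ℝ (Fin 2)) (hc : c ∈ D) (hc' : c' ∈ D)
    (hcc : dist c c' = 2) (hc'I : c' ∉ I) :
    (1/2 : ℝ) • (lift c + lift c') ∉
      convexHull ℝ ((lift '' I ∪ blockers D) \ {(1/2 : ℝ) • (lift c + lift c')}) := by
  have hcc4 : (c 0 - c' 0) ^ 2 + (c 1 - c' 1) ^ 2 = 4 := dist2sq hcc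
  set b : EuclideanSpace ℝ (Fin 3) := (1/2 : ℝ) • (lift c + lift c') with hbdef
  have hSfin : (lift '' I ∪ blockers D).Finite :=
    ((hD.subset hI).image _).union (blockers_finite hD)
  -- bound on the tilt functional
  obtain ⟨M0, hM0⟩ := (hSfin.image
    (fun s => (c' 0 - c 0) * s 0 + (c' 1 - c 1) * s 1)).bddAbove
  set tb : ℝ := (c' 0 - c 0) * b 0 + (c' 1 - c 1) * b 1 with htb
  set M : ℝ := max M0 tb - tb with hMdef
  have hMnn : 0 ≤ M := by rw [hMdef]; have := le_max_right M0 tb; linarith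
  set e : ℝ := 1 / (M + 3) with hedef
  have he : 0 < e := by rw [hedef]; positivity
  have heM : e * (M + 3) = 1 := by
    rw [hedef]; field_simp
  -- distance-to-midpoint facts
  have gm1 : ∀ x ∈ D, 1 ≤ (x 0 - (c 0 + c' 0)/2)^2 + (x 1 - (c 1 + c' 1)/2)^2 := by
    intro x hx
    by_cases hxc : x = c
    · subst hxc; rw [gap_near _ _ _ _ hcc4]
    by_cases hxc' : x = c'
    · rw [hxc']
      have h := gap_near (c' 0) (c' 1) (c 0) (c 1) (by linarith)
      nlinarith [h]
    · have h1 := sep4 (hsep x hx c hc hxc)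
      have h2 := sep4 (hsep x hx c' hc' hxc')
      nlinarith [gap_far (x 0) (x 1) (c 0) (c 1) (c' 0) (c' 1) h1 h2 hcc4]
  have gm3 : ∀ x ∈ D, x ≠ c → x ≠ c' →
      3 ≤ (x 0 - (c 0 + c' 0)/2)^2 + (x 1 - (c 1 + c' 1)/2)^2 := by
    intro x hx hxc hxc'
    exact gap_far _ _ _ _ _ _ (sep4 (hsep x hx c hc hxc)) (sep4 (hsep x hx c' hc' hxc')) hcc4
  refine hull_sep (f := fun z : EuclideanSpace ℝ (Fin 3) =>
      z 2 - (2*((c 0 + c' 0)/2)) * z 0 - (2*((c 1 + c' 1)/2)) * z 1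
        - e * ((c' 0 - c 0) * z 0 + (c' 1 - c 1) * z 1))
    (lin _ _ _ _ _)
    ((b 2 - (2*((c 0 + c' 0)/2)) * b 0 - (2*((c 1 + c' 1)/2)) * b 1
        - e * ((c' 0 - c 0) * b 0 + (c' 1 - c 1) * b 1)) + 2*e) ?_ (by simp only []; linarith)
  rintro s ⟨hs, hsne⟩
  simp only [Set.mem_singleton_iff] at hsne
  have hb0 : b 0 = (c 0 + c' 0)/2 := blk0 c c'
  have hb1 : b 1 = (c 1 + c' 1)/2 := blk1 c c'
  have hb2 : b 2 = (c 0 ^ 2 + c 1 ^ 2 + (c' 0 ^ 2 + c' 1 ^ 2))/2 := blk2 c c'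
  have hTs : (c' 0 - c 0) * s 0 + (c' 1 - c 1) * s 1 - tb ≤ M := by
    have h1 : (c' 0 - c 0) * s 0 + (c' 1 - c 1) * s 1 ≤ M0 := hM0 ⟨s, hs, rfl⟩
    rw [hMdef]; have := le_max_left M0 tb; linarith
  simp only []
  rw [hb0, hb1, hb2]
  rw [htb, hb0, hb1] at hTs
  rcases hs with ⟨y, hyI, rfl⟩ | ⟨d, hd, d', hd', hdd, rfl⟩
  · -- s = lift y
    by_cases hyc : y = c
    · subst hyc
      simp only [lift0, lift1, lift2]
      exact core_eq _ _ _ _ _ hcc4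
    · have hyc' : y ≠ c' := fun h => hc'I (h ▸ hyI)
      have h3 := gm3 y (hI hyI) hyc hyc'
      simp only [lift0, lift1, lift2] at hTs ⊢
      exact core_ineq _ _ _ _ _ _ _ _ _ hcc4 he heM hTs (by nlinarith [h3])
  · -- s = blocker of d, d'
    have hone : (d ≠ c ∧ d ≠ c') ∨ (d' ≠ c ∧ d' ≠ c') := by
      by_contra h
      push_neg at h
      obtain ⟨h1, h2⟩ := h
      have hdc : d = c ∨ d = c' := by tauto
      have hdc' : d' = c ∨ d' = c' := by tauto
      apply hsne
      rcases hdc with rfl | rfl <;> rcases hdc' with rfl | rfl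
      · simp at hdd
      · rfl
      · rw [add_comm]
      · simp at hdd
    have hq : 2 ≤ ((1/2:ℝ) • (lift d + lift d')) 2
        - 2*((c 0 + c' 0)/2) * ((1/2:ℝ) • (lift d + lift d')) 0
        - 2*((c 1 + c' 1)/2) * ((1/2:ℝ) • (lift d + lift d')) 1
        + (((c 0 + c' 0)/2)^2 + ((c 1 + c' 1)/2)^2) := by
      simp only [blk0, blk1, blk2]
      rcases hone with ⟨h1, h2⟩ | ⟨h1, h2⟩
      · nlinarith [gm3 d hd h1 h2, gm1 d' hd']
      · nlinarith [gm3 d' hd' h1 h2, gm1 d hd]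
    simp only [blk0, blk1, blk2] at hTs hq ⊢
    exact core_ineq _ _ _ _ _ _ _ _ _ hcc4 he heM hTs hq

lemma blocker_far {D : Set (EuclideanSpace ℝ (Fin 2))}
    (hsep : ∀ p ∈ D, ∀ q ∈ D, p ≠ q → 2 ≤ dist p q)
    {d d' y : EuclideanSpace ℝ (Fin 2)} (hd : d ∈ D) (hd' : d' ∈ D) (hy : y ∈ D)
    (hdd : dist d d' = 2) :
    4 ≤ (d 0 - y 0)^2 + (d 1 - y 1)^2 + ((d' 0 - y 0)^2 + (d' 1 - y 1)^2) := by
  rcases eq_or_ne d y with rfl | hdy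
  · nlinarith [dist2sq hdd]
  · nlinarith [sep4 (hsep d hd y hy hdy), sq_nonneg (d' 0 - y 0), sq_nonneg (d' 1 - y 1)]


set_option maxHeartbeats 1000000 in
/-- Let `D ⊆ ℝ²` be finite with pairwise distances at least `2`, let
`L = lift '' D`, `B` the blocking points, `P = L ∪ B`, with `L` and `B` disjoint. If
`I ⊆ D` is an independent set (all pairwise distances in `I` exceed `2`), then
`S = lift '' I ∪ B` is in empty convex position: `S` is in convex position and the convex
hull of `S` contains no point of `P \ S`. -/
theorem independent_gives_empty_convex_position (D : Set (EuclideanSpace ℝ (Fin 2)))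
    (hD : D.Finite) (hsep : ∀ p ∈ D, ∀ q ∈ D, p ≠ q → 2 ≤ dist p q)
    (hdisj : Disjoint (lift '' D) (blockers D))
    (I : Set (EuclideanSpace ℝ (Fin 2))) (hI : I ⊆ D)
    (hind : ∀ p ∈ I, ∀ q ∈ I, p ≠ q → 2 < dist p q) :
    (∀ p ∈ lift '' I ∪ blockers D,
        p ∉ convexHull ℝ ((lift '' I ∪ blockers D) \ {p})) ∧
    ∀ p ∈ (lift '' D ∪ blockers D) \ (lift '' I ∪ blockers D),
        p ∉ convexHull ℝ (lift '' I ∪ blockers D) := by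
  constructor
  · rintro p (⟨y, hyI, rfl⟩ | hpB)
    · -- a lifted point of I is a vertex
      refine hull_sep (f := fun z : EuclideanSpace ℝ (Fin 3) =>
          z 2 - (2 * y 0) * z 0 - (2 * y 1) * z 1 - 0 * (0 * z 0 + 0 * z 1))
        (lin _ _ _ _ _) (2 - (y 0 ^ 2 + y 1 ^ 2)) ?_
        (by simp only [lift0, lift1, lift2]; nlinarith [sq_nonneg (y 0)])
      rintro s ⟨hs, hsne⟩
      simp only [Set.mem_singleton_iff] at hsne
      simp only []
      rcases hs with ⟨y', hy', rfl⟩ | ⟨d, hd, d', hd', hdd, rfl⟩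
      · have hyy : y' ≠ y := fun h => hsne (by rw [h])
        have h4 := sep4 (hind y' hy' y hyI hyy).le
        simp only [lift0, lift1, lift2]
        nlinarith [h4]
      · have key := blocker_far hsep hd hd' (hI hyI) hdd
        simp only [blk0, blk1, blk2]
        nlinarith [key]
    · -- a blocker is a vertex
      obtain ⟨c, hc, c', hc', hcc, rfl⟩ := hpB
      by_cases hc'I : c' ∈ I
      · have hcI : c ∉ I := by
          intro hcI
          have h2 := hind c hcI c' hc'I (by intro h; rw [h] at hcc; simp at hcc)
          rw [hcc] at h2; exact absurd h2 (lt_irrefl _)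
        rw [show (1/2 : ℝ) • (lift c + lift c') = (1/2 : ℝ) • (lift c' + lift c) by
          rw [add_comm]]
        exact blocker_vertex D hD hsep I hI c' c hc' hc (by rw [dist_comm]; exact hcc) hcI
      · exact blocker_vertex D hD hsep I hI c c' hc hc' hcc hc'I
  · rintro p ⟨hp, hpS⟩
    rcases hp with ⟨d, hd, rfl⟩ | hpB
    · have hdI : d ∉ I := fun h => hpS (Or.inl ⟨d, h, rfl⟩)
      refine hull_sep (f := fun z : EuclideanSpace ℝ (Fin 3) =>
          z 2 - (2 * d 0) * z 0 - (2 * d 1) * z 1 - 0 * (0 * z 0 + 0 * z 1))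
        (lin _ _ _ _ _) (2 - (d 0 ^ 2 + d 1 ^ 2)) ?_
        (by simp only [lift0, lift1, lift2]; nlinarith [sq_nonneg (d 0)])
      rintro s (⟨y, hy, rfl⟩ | ⟨e, he, e', he', hee, rfl⟩)
      · have hyd : y ≠ d := fun h => hdI (h ▸ hy)
        have h4 := sep4 (hsep y (hI hy) d hd hyd)
        simp only [lift0, lift1, lift2]
        nlinarith [h4]
      · have key := blocker_far hsep he he' hd hee
        simp only [blk0, blk1, blk2]
        nlinarith [key]
    · exact absurd (Or.inr hpB) hpS
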